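/- A total preorder ≼ on a topological space (X,τ) is representable by a continuous utility function (a τ-continuous u : X → ℝ with x ≼ y ⟺ u(x) ≤ u(y) for all x, y ∈ X) if and only if ≼ is perfectly separable and τ-continuous. -/

import Mathlib

set_option linter.unusedSectionVars false
set_option maxHeartbeats 1000000

open Set

namespace DebreuAux

open scoped Classical

variable {X : Type*} [TopologicalSpace X]

/-- strict part of the relation -/
def SR (r : X → X → Prop) (x y : X) : Prop := r x y ∧ ¬ r y x

/-- `b` is an immediate successor of `a` -/
def Jmp (r : X → X → Prop) (a b : X) : Prop := SR r a b ∧ ∀ z, SR r a z → r b z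

section Forward

theorem forward_contours {r : X → X → Prop} {u : X → ℝ}
    (hu : Continuous u) (hrep : ∀ x y, r x y ↔ u x ≤ u y) (a : X) :
    IsOpen {t : X | r t a ∧ ¬ r a t} ∧ IsOpen {t : X | r a t ∧ ¬ r t a} := by
  constructor
  · have : {t : X | r t a ∧ ¬ r a t} = u ⁻¹' (Iio (u a)) := by
      ext t
      simp only [mem_setOf_eq, mem_preimage, mem_Iio, hrep, lt_iff_le_not_ge]
    rw [this]
    exact isOpen_Iio.preimage hu
  · have : {t : X | r a t ∧ ¬ r t a} = u ⁻¹' (Ioi (u a)) := by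
      ext t
      simp only [mem_setOf_eq, mem_preimage, mem_Ioi, hrep, lt_iff_le_not_ge]
    rw [this]
    exact isOpen_Ioi.preimage hu

theorem forward_dense [Nonempty X] {r : X → X → Prop} {u : X → ℝ}
    (hrep : ∀ x y, r x y ↔ u x ≤ u y) :
    ∃ D : Set X, D.Countable ∧
      ∀ x y, (r x y ∧ ¬ r y x) → ∃ d ∈ D, r x d ∧ r d y := by
  classical
  -- rational-interval picks
  let pick1 : ℚ → ℚ → Set X := fun a b =>
    if h : ∃ x : X, u x ∈ Ioo (a : ℝ) (b : ℝ) then {h.choose} else ∅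
  let D1 : Set X := ⋃ (a : ℚ) (b : ℚ), pick1 a b
  have hD1c : D1.Countable := by
    refine Set.countable_iUnion fun a => Set.countable_iUnion fun b => ?_
    by_cases h : ∃ x : X, u x ∈ Ioo (a : ℝ) (b : ℝ)
    · simp only [pick1, dif_pos h]; exact Set.countable_singleton _
    · simp only [pick1, dif_neg h]; exact Set.countable_empty
  -- jump lower value set
  let JL : Set ℝ := {s : ℝ | (∃ x, u x = s) ∧
    ∃ s', s < s' ∧ (∃ x, u x = s') ∧ ∀ z, s < u z → s' ≤ u z}
  let yf : ℝ → ℝ := fun s =>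
    if h : ∃ s', s < s' ∧ (∃ x, u x = s') ∧ ∀ z, s < u z → s' ≤ u z then h.choose else s + 1
  have hyf : ∀ s ∈ JL, s < yf s ∧ (∃ x, u x = yf s) ∧ ∀ z, s < u z → yf s ≤ u z := by
    intro s hs
    obtain ⟨-, hs2⟩ := hs
    simp only [yf, dif_pos hs2]
    exact hs2.choose_spec
  have hJLc : JL.Countable := by
    refine Set.PairwiseDisjoint.countable_of_Ioo (y := yf) ?_ (fun s hs => (hyf s hs).1)
    intro s1 h1 s2 h2 hne
    refine Set.disjoint_left.mpr fun z hz1 hz2 => ?_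
    rcases lt_or_gt_of_ne hne with h | h
    · -- s1 < s2, s2 is a value > s1, so yf s1 ≤ s2
      obtain ⟨x2, hx2⟩ := h2.1
      have : yf s1 ≤ s2 := hx2 ▸ (hyf s1 h1).2.2 x2 (by rw [hx2]; exact h)
      exact absurd (hz1.2.trans_le (this.trans hz2.1.le)) (lt_irrefl z)
    · obtain ⟨x1, hx1⟩ := h1.1
      have : yf s2 ≤ s1 := hx1 ▸ (hyf s2 h2).2.2 x1 (by rw [hx1]; exact h)
      exact absurd (hz2.2.trans_le (this.trans hz1.1.le)) (lt_irrefl z)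
  let xf : ℝ → X := fun s => if h : ∃ x, u x = s then h.choose else Classical.arbitrary X
  let D2 : Set X := xf '' JL
  refine ⟨D1 ∪ D2, hD1c.union (hJLc.image xf), ?_⟩
  rintro x y ⟨hxy, hyx⟩
  have hlt : u x < u y := lt_of_le_not_ge ((hrep x y).mp hxy) (fun h => hyx ((hrep y x).mpr h))
  by_cases hz : ∃ z, u x < u z ∧ u z < u y
  · obtain ⟨z, hz1, hz2⟩ := hz
    obtain ⟨a, ha1, ha2⟩ := exists_rat_btwn hz1
    obtain ⟨b, hb1, hb2⟩ := exists_rat_btwn hz2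
    have h : ∃ x : X, u x ∈ Ioo (a : ℝ) (b : ℝ) := ⟨z, ha2, hb1⟩
    refine ⟨h.choose, Or.inl ?_, ?_, ?_⟩
    · refine mem_iUnion.mpr ⟨a, mem_iUnion.mpr ⟨b, ?_⟩⟩
      simp only [pick1, dif_pos h]; rfl
    · exact (hrep _ _).mpr (ha1.le.trans h.choose_spec.1.le)
    · exact (hrep _ _).mpr (h.choose_spec.2.le.trans hb2.le)
  · push_neg at hz
    have hmem : u x ∈ JL := by
      exact ⟨⟨x, rfl⟩, u y, hlt, ⟨y, rfl⟩, fun z hz' => (hz z hz')⟩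
    have hex : ∃ x', u x' = u x := ⟨x, rfl⟩
    have hval : u (xf (u x)) = u x := by simp only [xf, dif_pos hex]; exact hex.choose_spec
    refine ⟨xf (u x), Or.inr ⟨u x, hmem, rfl⟩, ?_, ?_⟩
    · exact (hrep _ _).mpr (le_of_eq hval.symm)
    · exact (hrep _ _).mpr (hval.le.trans hlt.le)

end Forward


section Backward

variable {r : X → X → Prop}

section OrderLemmas

variable (htrans : ∀ x y z, r x y → r y z → r x z) (htotal : ∀ x y, r x y ∨ r y x)

include htotal in
theorem sr_of_not (h : ¬ r x y) : SR r y x :=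
  ⟨(htotal x y).resolve_left h, h⟩

theorem not_sr (h : r y x) : ¬ SR r x y := fun hs => hs.2 h

include htotal in
theorem of_not_sr (h : ¬ SR r x y) : r y x := by
  rcases htotal y x with h' | h'
  · exact h'
  · by_contra hc
    exact h ⟨h', hc⟩

include htrans in
theorem sr_trans_left (h1 : r x y) (h2 : SR r y z) : SR r x z :=
  ⟨htrans _ _ _ h1 h2.1, fun hc => h2.2 (htrans _ _ _ hc h1)⟩

include htrans in
theorem sr_trans_right (h1 : SR r x y) (h2 : r y z) : SR r x z :=
  ⟨htrans _ _ _ h1.1 h2, fun hc => h1.2 (htrans _ _ _ h2 hc)⟩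

include htrans in
theorem sr_trans (h1 : SR r x y) (h2 : SR r y z) : SR r x z :=
  sr_trans_left htrans h1.1 h2

end OrderLemmas

/-- continuity of the indicator of a clopen set -/
theorem cont_ind {s : Set X} (ho : IsOpen s) (hc : IsOpen sᶜ) :
    Continuous (fun x => if x ∈ s then (1:ℝ) else 0) := by
  classical
  rw [continuous_def]
  intro U hU
  have : (fun x => if x ∈ s then (1:ℝ) else 0) ⁻¹' U =
      ((if (1:ℝ) ∈ U then s else ∅) ∪ (if (0:ℝ) ∈ U then sᶜ else ∅)) := by
    ext x
    by_cases hx : x ∈ s <;> split_ifs with h1 h2 <;>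
      simp [hx, h1, *] <;> tauto
  rw [this]
  split_ifs <;> simp [ho, hc, isOpen_empty, IsOpen.union]

theorem cont_aux {f : X → ℝ}
    (h1 : ∀ c, IsOpen {x | f x < c}) (h2 : ∀ c, IsOpen {x | c < f x}) : Continuous f := by
  rw [OrderTopology.topology_eq_generate_intervals (α := ℝ)]
  refine continuous_generateFrom_iff.mpr ?_
  rintro s ⟨a, rfl | rfl⟩
  · exact h2 a
  · exact h1 a

section Jpart

variable (r)
variable (dd : ℕ → X)

/-- indicator that `x` is strictly above `dd k`, where `dd k` has an immediate successor -/
noncomputable def j1 (k : ℕ) (x : X) : ℝ :=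
  if (∃ b, Jmp r (dd k) b) ∧ SR r (dd k) x then 1 else 0

/-- indicator that `x` is weakly above `dd k`, where `dd k` has an immediate predecessor -/
noncomputable def j2 (k : ℕ) (x : X) : ℝ :=
  if (∃ a, Jmp r a (dd k)) ∧ r (dd k) x then 1 else 0

noncomputable def Jfun (x : X) : ℝ := ∑' k : ℕ, (1/2)^k * (j1 r dd k x + j2 r dd k x)

variable {r}
variable (htrans : ∀ x y z, r x y → r y z → r x z) (htotal : ∀ x y, r x y ∨ r y x)
variable (hO : ∀ a : X, IsOpen {t | SR r t a} ∧ IsOpen {t | SR r a t})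

theorem j1_nonneg (k : ℕ) (x : X) : 0 ≤ j1 r dd k x := by
  unfold j1; split_ifs <;> norm_num

theorem j1_le_one (k : ℕ) (x : X) : j1 r dd k x ≤ 1 := by
  unfold j1; split_ifs <;> norm_num

theorem j2_nonneg (k : ℕ) (x : X) : 0 ≤ j2 r dd k x := by
  unfold j2; split_ifs <;> norm_num

theorem j2_le_one (k : ℕ) (x : X) : j2 r dd k x ≤ 1 := by
  unfold j2; split_ifs <;> norm_num

include htrans in
theorem j1_mono (k : ℕ) {x y : X} (hxy : r x y) : j1 r dd k x ≤ j1 r dd k y := by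
  unfold j1
  split_ifs with h1 h2
  · exact le_refl _
  · exact absurd ⟨h1.1, sr_trans_right htrans h1.2 hxy⟩ h2
  · norm_num
  · exact le_refl _

include htrans in
theorem j2_mono (k : ℕ) {x y : X} (hxy : r x y) : j2 r dd k x ≤ j2 r dd k y := by
  unfold j2
  split_ifs with h1 h2
  · exact le_refl _
  · exact absurd ⟨h1.1, htrans _ _ _ h1.2 hxy⟩ h2
  · norm_num
  · exact le_refl _

include htrans htotal hO in
theorem j1_cont (k : ℕ) : Continuous (j1 r dd k) := by
  by_cases hj : ∃ b, Jmp r (dd k) b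
  · obtain ⟨b, hb⟩ := hj
    have he : {x | SR r (dd k) x}ᶜ = {x | SR r x b} := by
      ext x
      simp only [mem_compl_iff, mem_setOf_eq]
      constructor
      · intro hx
        have hx' : r x (dd k) := of_not_sr htotal hx
        exact ⟨htrans _ _ _ hx' hb.1.1, fun hc => hb.1.2 (htrans _ _ _ hc hx')⟩
      · intro hx hsx
        exact hx.2 (hb.2 x hsx)
    have hj' : ∃ b', Jmp r (dd k) b' := ⟨b, hb⟩
    have heq : j1 r dd k = fun x => if x ∈ {x | SR r (dd k) x} then (1:ℝ) else 0 := by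
      funext x
      unfold j1
      by_cases hx : SR r (dd k) x <;> simp [hx, hj']
    rw [heq]
    exact cont_ind ((hO (dd k)).2) (he ▸ (hO b).1)
  · have heq : j1 r dd k = fun _ => (0:ℝ) := by
      funext x; unfold j1; rw [if_neg (fun hc => hj hc.1)]
    rw [heq]; exact continuous_const

include htrans htotal hO in
theorem j2_cont (k : ℕ) : Continuous (j2 r dd k) := by
  by_cases hj : ∃ a, Jmp r a (dd k)
  · obtain ⟨a, ha⟩ := hj
    have he : {x | r (dd k) x} = {x | SR r a x} := by
      ext x
      simp only [mem_setOf_eq]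
      constructor
      · intro hx
        exact ⟨htrans _ _ _ ha.1.1 hx, fun hc => ha.1.2 (htrans _ _ _ hx hc)⟩
      · intro hx
        exact ha.2 x hx
    have hcomp : {x | r (dd k) x}ᶜ = {x | SR r x (dd k)} := by
      ext x
      simp only [mem_compl_iff, mem_setOf_eq]
      constructor
      · intro hx; exact ⟨of_not_sr htotal (fun hs => hx hs.1), hx⟩
      · intro hx; exact hx.2
    have hj' : ∃ a', Jmp r a' (dd k) := ⟨a, ha⟩
    have heq : j2 r dd k = fun x => if x ∈ {x | r (dd k) x} then (1:ℝ) else 0 := by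
      funext x
      unfold j2
      by_cases hx : r (dd k) x <;> simp [hx, hj']
    rw [heq]
    exact cont_ind (he ▸ (hO a).2) (hcomp ▸ (hO (dd k)).1)
  · have heq : j2 r dd k = fun _ => (0:ℝ) := by
      funext x; unfold j2; rw [if_neg (fun hc => hj hc.1)]
    rw [heq]; exact continuous_const

theorem Jsummable (x : X) : Summable (fun k => (1/2)^k * (j1 r dd k x + j2 r dd k x)) := by
  refine Summable.of_nonneg_of_le (fun k => ?_) (fun k => ?_)
    (summable_geometric_two.mul_right 2)
  · have h1 := j1_nonneg (r := r) dd k x; have h2 := j2_nonneg (r := r) dd k x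
    exact mul_nonneg (by positivity) (by linarith)
  · have h1 := j1_le_one (r := r) dd k x; have h2 := j2_le_one (r := r) dd k x
    have h3 : j1 r dd k x + j2 r dd k x ≤ 2 := by linarith
    exact mul_le_mul_of_nonneg_left h3 (by positivity)

include htrans htotal hO in
theorem Jcont : Continuous (Jfun r dd) := by
  refine continuous_tsum (u := fun k => (1/2)^k * 2) ?_ (summable_geometric_two.mul_right 2) ?_
  · intro k
    exact continuous_const.mul ((j1_cont dd htrans htotal hO k).add (j2_cont dd htrans htotal hO k))
  · intro k x
    rw [Real.norm_eq_abs, abs_mul, abs_of_nonneg (by positivity : (0:ℝ) ≤ (1/2)^k)]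
    refine mul_le_mul_of_nonneg_left ?_ (by positivity)
    rw [abs_of_nonneg (by have := j1_nonneg (r := r) dd k x; have := j2_nonneg (r := r) dd k x; linarith)]
    have := j1_le_one (r := r) dd k x; have := j2_le_one (r := r) dd k x; linarith

include htrans in
theorem Jmono {x y : X} (hxy : r x y) : Jfun r dd x ≤ Jfun r dd y := by
  refine Summable.tsum_le_tsum (fun k => ?_) (Jsummable dd x) (Jsummable dd y)
  refine mul_le_mul_of_nonneg_left ?_ (by positivity)
  exact add_le_add (j1_mono dd htrans k hxy) (j2_mono dd htrans k hxy)

include htrans htotal in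
theorem Jstrict {x y a b : X} (hab : Jmp r a b) (hxa : r x a) (hby : r b y)
    {k : ℕ} (hd : r a (dd k) ∧ r (dd k) b) :
    Jfun r dd x < Jfun r dd y := by
  have hxy : r x y := htrans _ _ _ hxa (htrans _ _ _ hab.1.1 hby)
  refine Summable.tsum_lt_tsum (i := k)
    (fun n => mul_le_mul_of_nonneg_left
      (add_le_add (j1_mono dd htrans n hxy) (j2_mono dd htrans n hxy)) (by positivity))
    ?_ (Jsummable dd x) (Jsummable dd y)
  refine mul_lt_mul_of_pos_left ?_ (by positivity)
  by_cases hda : r (dd k) a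
  · -- dd k ∼ a : use j1
    have hcond : ∃ b', Jmp r (dd k) b' := by
      refine ⟨b, ⟨hd.2, fun hc => hab.1.2 (htrans _ _ _ hc hda)⟩, ?_⟩
      intro z hz
      exact hab.2 z ⟨htrans _ _ _ hd.1 hz.1, fun hc => hz.2 (htrans _ _ _ hc hd.1)⟩
    have h1x : j1 r dd k x = 0 := by
      unfold j1
      rw [if_neg]
      rintro ⟨-, hs⟩
      exact hs.2 (htrans _ _ _ hxa hd.1)
    have h1y : j1 r dd k y = 1 := by
      unfold j1
      rw [if_pos]
      refine ⟨hcond, htrans _ _ _ (htrans _ _ _ hda hab.1.1) hby, fun hc => ?_⟩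
      exact hab.1.2 (htrans _ _ _ (htrans _ _ _ hby hc) hda)
    have := j2_mono dd htrans k hxy (x := x) (y := y)
    rw [h1x, h1y] at *
    linarith
  · -- a ≺ dd k : use j2
    have hsad : SR r a (dd k) := ⟨hd.1, hda⟩
    have hcond : ∃ a', Jmp r a' (dd k) := by
      refine ⟨a, hsad, fun z hz => htrans _ _ _ hd.2 (hab.2 z hz)⟩
    have h2x : j2 r dd k x = 0 := by
      unfold j2
      rw [if_neg]
      rintro ⟨-, hs⟩
      exact hda (htrans _ _ _ hs hxa)
    have h2y : j2 r dd k y = 1 := by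
      unfold j2
      rw [if_pos ⟨hcond, htrans _ _ _ hd.2 hby⟩]
    have := j1_mono dd htrans k hxy (x := x) (y := y)
    rw [h2x, h2y] at *
    linarith

end Jpart

section Gpart

variable (r)
variable (dd : ℕ → X) (p q : X)

/-- enumeration with the two endpoints in front -/
def ee (k : ℕ) : X := if k = 0 then p else if k = 1 then q else dd (k - 2)

/-- indices whose point lies (weakly) between `p` and `q` -/
def Ep (k : ℕ) : Prop := r p (ee dd p q k) ∧ r (ee dd p q k) q

/-- canonical indices: in the band, and first of their equivalence class -/
def Can (k : ℕ) : Prop := Ep r dd p q k ∧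
  ∀ m < k, ¬(Ep r dd p q m ∧ r (ee dd p q m) (ee dd p q k) ∧ r (ee dd p q k) (ee dd p q m))

/-- earlier canonical indices strictly below `k` -/
noncomputable def LS (k : ℕ) : Finset ℕ :=
  (Finset.range k).filter (fun m => Can r dd p q m ∧ SR r (ee dd p q m) (ee dd p q k))

/-- earlier canonical indices strictly above `k` -/
noncomputable def US (k : ℕ) : Finset ℕ :=
  (Finset.range k).filter (fun m => Can r dd p q m ∧ SR r (ee dd p q k) (ee dd p q m))

noncomputable def tstep (f : ℕ → ℝ) (k : ℕ) : ℝ :=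
  if k = 0 then 0
  else if k = 1 then 1
  else if Can r dd p q k then
    (if hL : (LS r dd p q k).Nonempty then
      (if hU : (US r dd p q k).Nonempty then
        (((LS r dd p q k).image f).max' (hL.image f)
          + ((US r dd p q k).image f).min' (hU.image f)) / 2
      else 0)
    else 0)
  else 0

noncomputable def tvA : ℕ → ℕ → ℝ
  | 0 => fun _ => 0
  | (s+1) => Function.update (tvA s) s (tstep r dd p q (tvA s) s)

noncomputable def tv (k : ℕ) : ℝ := tvA r dd p q (k+1) k

variable {r dd p q}

theorem tvA_stable : ∀ s k, k < s → tvA r dd p q s k = tv r dd p q k := by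
  intro s
  induction s with
  | zero => intro k hk; omega
  | succ s ih =>
    intro k hk
    rcases Nat.lt_succ_iff_lt_or_eq.mp hk with h | h
    · rw [show tvA r dd p q (s+1) k = tvA r dd p q s k by
        simp [tvA, Function.update, (Nat.ne_of_lt h)]]
      exact ih k h
    · subst h
      rfl

theorem tstep_congr {f f' : ℕ → ℝ} (k : ℕ) (h : ∀ m < k, f m = f' m) :
    tstep r dd p q f k = tstep r dd p q f' k := by
  have hL : (LS r dd p q k).image f = (LS r dd p q k).image f' := by
    refine Finset.image_congr fun m hm => ?_
    exact h m (Finset.mem_range.mp (Finset.mem_of_mem_filter m hm))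
  have hU : (US r dd p q k).image f = (US r dd p q k).image f' := by
    refine Finset.image_congr fun m hm => ?_
    exact h m (Finset.mem_range.mp (Finset.mem_of_mem_filter m hm))
  unfold tstep
  split_ifs <;> simp_all

theorem tv_spec (k : ℕ) : tv r dd p q k = tstep r dd p q (tv r dd p q) k := by
  have h1 : tv r dd p q k = tstep r dd p q (tvA r dd p q k) k := by
    show tvA r dd p q (k+1) k = _
    simp [tvA, Function.update]
  rw [h1]
  exact tstep_congr k (fun m hm => tvA_stable k m hm)

theorem tv_zero : tv r dd p q 0 = 0 := by rw [tv_spec]; simp [tstep]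

theorem tv_one : tv r dd p q 1 = 1 := by rw [tv_spec]; simp [tstep]

variable (hrefl : ∀ x, r x x) (htrans : ∀ x y z, r x y → r y z → r x z)
  (htotal : ∀ x y, r x y ∨ r y x) (hpq : SR r p q)

theorem ee_zero : ee dd p q 0 = p := rfl
theorem ee_one : ee dd p q 1 = q := rfl

include hrefl hpq in
theorem can_zero : Can r dd p q 0 := by
  refine ⟨⟨hrefl p, hpq.1⟩, fun m hm => by omega⟩

include hrefl hpq in
theorem can_one : Can r dd p q 1 := by
  refine ⟨⟨hpq.1, hrefl q⟩, fun m hm => ?_⟩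
  interval_cases m
  rintro ⟨-, -, hqp⟩
  exact hpq.2 hqp

include htotal in
theorem can_unique {m k : ℕ} (hm : Can r dd p q m) (hk : Can r dd p q k)
    (h1 : r (ee dd p q m) (ee dd p q k)) (h2 : r (ee dd p q k) (ee dd p q m)) : m = k := by
  rcases lt_trichotomy m k with h | h | h
  · exact absurd ⟨hm.1, h1, h2⟩ (hk.2 m h)
  · exact h
  · exact absurd ⟨hk.1, h2, h1⟩ (hm.2 k h)

include hrefl hpq in
theorem zero_mem_LS {k : ℕ} (hk2 : 2 ≤ k) (hck : Can r dd p q k) :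
    0 ∈ LS r dd p q k := by
  refine Finset.mem_filter.mpr ⟨Finset.mem_range.mpr (by omega), can_zero hrefl hpq, ?_⟩
  refine ⟨hck.1.1, fun hc => ?_⟩
  exact hck.2 0 (by omega) ⟨(can_zero hrefl hpq).1, hck.1.1, hc⟩

include hrefl hpq in
theorem one_mem_US {k : ℕ} (hk2 : 2 ≤ k) (hck : Can r dd p q k) :
    1 ∈ US r dd p q k := by
  refine Finset.mem_filter.mpr ⟨Finset.mem_range.mpr (by omega), can_one hrefl hpq, ?_⟩
  refine ⟨hck.1.2, fun hc => ?_⟩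
  exact hck.2 1 (by omega) ⟨(can_one hrefl hpq).1, hc, hck.1.2⟩

include hrefl htrans htotal hpq in
theorem tv_invariant : ∀ k, Can r dd p q k →
    (0 ≤ tv r dd p q k ∧ tv r dd p q k ≤ 1) ∧
    ∀ m < k, Can r dd p q m →
      (SR r (ee dd p q m) (ee dd p q k) → tv r dd p q m < tv r dd p q k) ∧
      (SR r (ee dd p q k) (ee dd p q m) → tv r dd p q k < tv r dd p q m) := by
  intro k
  induction k using Nat.strong_induction_on with
  | _ k ih =>
    intro hck
    match k, hck with
    | 0, _ => exact ⟨by rw [tv_zero]; norm_num, fun m hm => by omega⟩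
    | 1, _ =>
      refine ⟨by rw [tv_one]; norm_num, fun m hm hcm => ?_⟩
      interval_cases m
      rw [tv_zero, tv_one]
      exact ⟨fun _ => by norm_num, fun hs => absurd hs.1 hpq.2⟩
    | (n+2), hck => ?_
    set k := n + 2 with hkdef
    have hk2 : 2 ≤ k := by omega
    have hLne : (LS r dd p q k).Nonempty := ⟨0, zero_mem_LS hrefl hpq hk2 hck⟩
    have hUne : (US r dd p q k).Nonempty := ⟨1, one_mem_US hrefl hpq hk2 hck⟩
    have hform : tv r dd p q k =
        (((LS r dd p q k).image (tv r dd p q)).max' (hLne.image _)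
          + ((US r dd p q k).image (tv r dd p q)).min' (hUne.image _)) / 2 := by
      rw [tv_spec]
      unfold tstep
      rw [if_neg (by omega : ¬ k = 0), if_neg (by omega : ¬ k = 1), if_pos hck,
        dif_pos hLne, dif_pos hUne]
    obtain ⟨ma, hma, hmaA⟩ := Finset.mem_image.mp
      (((LS r dd p q k).image (tv r dd p q)).max'_mem (hLne.image _))
    obtain ⟨mb, hmb, hmbB⟩ := Finset.mem_image.mp
      (((US r dd p q k).image (tv r dd p q)).min'_mem (hUne.image _))
    rw [← hmaA, ← hmbB] at hform
    obtain ⟨hmaR, hmaC, hmaS⟩ := Finset.mem_filter.mp hma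
    obtain ⟨hmbR, hmbC, hmbS⟩ := Finset.mem_filter.mp hmb
    rw [Finset.mem_range] at hmaR hmbR
    -- comparison of two smaller canonical indices
    have hcomp : ∀ m1 m2, m1 < k → m2 < k → Can r dd p q m1 → Can r dd p q m2 →
        SR r (ee dd p q m1) (ee dd p q m2) → tv r dd p q m1 < tv r dd p q m2 := by
      intro m1 m2 h1 h2 hc1 hc2 hs
      rcases lt_trichotomy m1 m2 with h | h | h
      · exact ((ih m2 h2 hc2).2 m1 h hc1).1 hs
      · subst h; exact absurd hs.1 (fun hc => hs.2 hc)
      · exact ((ih m1 h1 hc1).2 m2 h hc2).2 hs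
    have hAB : tv r dd p q ma < tv r dd p q mb :=
      hcomp ma mb hmaR hmbR hmaC hmbC (sr_trans htrans hmaS hmbS)
    have hA0 : 0 ≤ tv r dd p q ma := ((ih ma hmaR hmaC).1).1
    have hB1 : tv r dd p q mb ≤ 1 := ((ih mb hmbR hmbC).1).2
    constructor
    · rw [hform]; constructor <;> nlinarith
    · intro m hm hcm
      constructor
      · intro hs
        have hmem : m ∈ LS r dd p q k :=
          Finset.mem_filter.mpr ⟨Finset.mem_range.mpr hm, hcm, hs⟩
        have hle : tv r dd p q m ≤ tv r dd p q ma := by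
          have := Finset.le_max' ((LS r dd p q k).image (tv r dd p q)) _
            (Finset.mem_image.mpr ⟨m, hmem, rfl⟩)
          rwa [← hmaA] at this
        rw [hform]; nlinarith
      · intro hs
        have hmem : m ∈ US r dd p q k :=
          Finset.mem_filter.mpr ⟨Finset.mem_range.mpr hm, hcm, hs⟩
        have hle : tv r dd p q mb ≤ tv r dd p q m := by
          have := Finset.min'_le ((US r dd p q k).image (tv r dd p q)) _
            (Finset.mem_image.mpr ⟨m, hmem, rfl⟩)
          rwa [← hmbB] at this
        rw [hform]; nlinarith

include hrefl htrans htotal hpq in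
theorem tv_bounds {k : ℕ} (hk : Can r dd p q k) :
    0 ≤ tv r dd p q k ∧ tv r dd p q k ≤ 1 :=
  (tv_invariant hrefl htrans htotal hpq k hk).1

include hrefl htrans htotal hpq in
theorem tv_lt {m k : ℕ} (hm : Can r dd p q m) (hk : Can r dd p q k)
    (hs : SR r (ee dd p q m) (ee dd p q k)) : tv r dd p q m < tv r dd p q k := by
  rcases lt_trichotomy m k with h | h | h
  · exact ((tv_invariant hrefl htrans htotal hpq k hk).2 m h hm).1 hs
  · subst h; exact absurd hs.1 (fun hc => hs.2 hc)
  · exact ((tv_invariant hrefl htrans htotal hpq m hm).2 k h hk).2 hs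


include hrefl htrans htotal hpq in
theorem tv_midpoint {k : ℕ} (hk2 : 2 ≤ k) (hck : Can r dd p q k) :
    ∃ nb < k, Can r dd p q nb ∧ SR r (ee dd p q k) (ee dd p q nb) ∧
      (∀ v < k, Can r dd p q v → SR r (ee dd p q k) (ee dd p q v) →
        tv r dd p q nb ≤ tv r dd p q v) ∧
      (∀ w < k, Can r dd p q w → SR r (ee dd p q w) (ee dd p q k) →
        tv r dd p q nb - tv r dd p q k ≤ (tv r dd p q nb - tv r dd p q w)/2) := by
  have hLne : (LS r dd p q k).Nonempty := ⟨0, zero_mem_LS hrefl hpq hk2 hck⟩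
  have hUne : (US r dd p q k).Nonempty := ⟨1, one_mem_US hrefl hpq hk2 hck⟩
  have hform : tv r dd p q k =
      (((LS r dd p q k).image (tv r dd p q)).max' (hLne.image _)
        + ((US r dd p q k).image (tv r dd p q)).min' (hUne.image _)) / 2 := by
    rw [tv_spec]
    unfold tstep
    rw [if_neg (by omega : ¬ k = 0), if_neg (by omega : ¬ k = 1), if_pos hck,
      dif_pos hLne, dif_pos hUne]
  obtain ⟨ma, hma, hmaA⟩ := Finset.mem_image.mp
    (((LS r dd p q k).image (tv r dd p q)).max'_mem (hLne.image _))
  obtain ⟨mb, hmb, hmbB⟩ := Finset.mem_image.mp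
    (((US r dd p q k).image (tv r dd p q)).min'_mem (hUne.image _))
  rw [← hmaA, ← hmbB] at hform
  obtain ⟨hmaR, hmaC, hmaS⟩ := Finset.mem_filter.mp hma
  obtain ⟨hmbR, hmbC, hmbS⟩ := Finset.mem_filter.mp hmb
  rw [Finset.mem_range] at hmaR hmbR
  refine ⟨mb, hmbR, hmbC, hmbS, ?_, ?_⟩
  · intro v hv hcv hsv
    have hmem : v ∈ US r dd p q k :=
      Finset.mem_filter.mpr ⟨Finset.mem_range.mpr hv, hcv, hsv⟩
    have := Finset.min'_le ((US r dd p q k).image (tv r dd p q)) _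
      (Finset.mem_image.mpr ⟨v, hmem, rfl⟩)
    rwa [← hmbB] at this
  · intro w hw hcw hsw
    have hmem : w ∈ LS r dd p q k :=
      Finset.mem_filter.mpr ⟨Finset.mem_range.mpr hw, hcw, hsw⟩
    have hle : tv r dd p q w ≤ tv r dd p q ma := by
      have := Finset.le_max' ((LS r dd p q k).image (tv r dd p q)) _
        (Finset.mem_image.mpr ⟨w, hmem, rfl⟩)
      rwa [← hmaA] at this
    rw [hform]; linarith

include hrefl htrans htotal hpq in
theorem tv_midpoint' {k : ℕ} (hk2 : 2 ≤ k) (hck : Can r dd p q k) :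
    ∃ na < k, Can r dd p q na ∧ SR r (ee dd p q na) (ee dd p q k) ∧
      (∀ w < k, Can r dd p q w → SR r (ee dd p q w) (ee dd p q k) →
        tv r dd p q w ≤ tv r dd p q na) ∧
      (∀ v < k, Can r dd p q v → SR r (ee dd p q k) (ee dd p q v) →
        tv r dd p q k - tv r dd p q na ≤ (tv r dd p q v - tv r dd p q na)/2) := by
  have hLne : (LS r dd p q k).Nonempty := ⟨0, zero_mem_LS hrefl hpq hk2 hck⟩
  have hUne : (US r dd p q k).Nonempty := ⟨1, one_mem_US hrefl hpq hk2 hck⟩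
  have hform : tv r dd p q k =
      (((LS r dd p q k).image (tv r dd p q)).max' (hLne.image _)
        + ((US r dd p q k).image (tv r dd p q)).min' (hUne.image _)) / 2 := by
    rw [tv_spec]
    unfold tstep
    rw [if_neg (by omega : ¬ k = 0), if_neg (by omega : ¬ k = 1), if_pos hck,
      dif_pos hLne, dif_pos hUne]
  obtain ⟨ma, hma, hmaA⟩ := Finset.mem_image.mp
    (((LS r dd p q k).image (tv r dd p q)).max'_mem (hLne.image _))
  obtain ⟨mb, hmb, hmbB⟩ := Finset.mem_image.mp
    (((US r dd p q k).image (tv r dd p q)).min'_mem (hUne.image _))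
  rw [← hmaA, ← hmbB] at hform
  obtain ⟨hmaR, hmaC, hmaS⟩ := Finset.mem_filter.mp hma
  obtain ⟨hmbR, hmbC, hmbS⟩ := Finset.mem_filter.mp hmb
  rw [Finset.mem_range] at hmaR hmbR
  refine ⟨ma, hmaR, hmaC, hmaS, ?_, ?_⟩
  · intro w hw hcw hsw
    have hmem : w ∈ LS r dd p q k :=
      Finset.mem_filter.mpr ⟨Finset.mem_range.mpr hw, hcw, hsw⟩
    have := Finset.le_max' ((LS r dd p q k).image (tv r dd p q)) _
      (Finset.mem_image.mpr ⟨w, hmem, rfl⟩)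
    rwa [← hmaA] at this
  · intro v hv hcv hsv
    have hmem : v ∈ US r dd p q k :=
      Finset.mem_filter.mpr ⟨Finset.mem_range.mpr hv, hcv, hsv⟩
    have hle : tv r dd p q mb ≤ tv r dd p q v := by
      have := Finset.min'_le ((US r dd p q k).image (tv r dd p q)) _
        (Finset.mem_image.mpr ⟨v, hmem, rfl⟩)
      rwa [← hmbB] at this
    rw [hform]; linarith

variable (r dd p q) in
noncomputable def LSx (x : X) (s : ℕ) : Finset ℕ :=
  (Finset.range s).filter (fun m => Can r dd p q m ∧ SR r (ee dd p q m) x)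

variable (r dd p q) in
noncomputable def USx (x : X) (s : ℕ) : Finset ℕ :=
  (Finset.range s).filter (fun n => Can r dd p q n ∧ r x (ee dd p q n))

include hrefl htrans htotal hpq in
theorem H2lem (x : X) (hxq : r x q)
    (hLne : ∃ m, Can r dd p q m ∧ SR r (ee dd p q m) x)
    (hnomax : ∀ m, Can r dd p q m → SR r (ee dd p q m) x →
      ∃ n, Can r dd p q n ∧ SR r (ee dd p q m) (ee dd p q n) ∧ SR r (ee dd p q n) x) :
    ∀ ε > 0, ∃ m k, Can r dd p q m ∧ SR r (ee dd p q m) x ∧ Can r dd p q k ∧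
      r x (ee dd p q k) ∧ tv r dd p q k - tv r dd p q m < ε := by
  have claim : ∀ j : ℕ, ∃ s, ∃ w ∈ LSx r dd p q x s, ∃ v ∈ USx r dd p q x s,
      (∀ b ∈ LSx r dd p q x s, tv r dd p q b ≤ tv r dd p q w) ∧
      (∀ b ∈ USx r dd p q x s, tv r dd p q v ≤ tv r dd p q b) ∧
      tv r dd p q v - tv r dd p q w ≤ (1/2 : ℝ)^j := by
    intro j
    induction j with
    | zero =>
      obtain ⟨m₀, hm₀c, hm₀s⟩ := hLne
      have hsne : (LSx r dd p q x (m₀ + 2)).Nonempty :=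
        ⟨m₀, Finset.mem_filter.mpr ⟨Finset.mem_range.mpr (by omega), hm₀c, hm₀s⟩⟩
      have hune : (USx r dd p q x (m₀ + 2)).Nonempty :=
        ⟨1, Finset.mem_filter.mpr ⟨Finset.mem_range.mpr (by omega), can_one hrefl hpq, hxq⟩⟩
      obtain ⟨w, hw, hwmax⟩ := Finset.exists_max_image _ (tv r dd p q) hsne
      obtain ⟨v, hv, hvmin⟩ := Finset.exists_min_image _ (tv r dd p q) hune
      refine ⟨m₀ + 2, w, hw, v, hv, hwmax, hvmin, ?_⟩
      obtain ⟨-, hwc, -⟩ := Finset.mem_filter.mp hw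
      obtain ⟨-, hvc, -⟩ := Finset.mem_filter.mp hv
      have h1 := (tv_bounds hrefl htrans htotal hpq hwc).1
      have h2 := (tv_bounds hrefl htrans htotal hpq hvc).2
      simpa using by linarith
    | succ j ihj =>
      obtain ⟨s, w, hw, v, hv, hwmax, hvmin, hgap⟩ := ihj
      obtain ⟨hwR, hwc, hws⟩ := Finset.mem_filter.mp hw
      obtain ⟨hvR, hvc, hvs⟩ := Finset.mem_filter.mp hv
      rw [Finset.mem_range] at hwR hvR
      have hPex : ∃ n, Can r dd p q n ∧ SR r (ee dd p q n) x ∧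
          SR r (ee dd p q w) (ee dd p q n) := by
        obtain ⟨n, h1, h2, h3⟩ := hnomax w hwc hws
        exact ⟨n, h1, h3, h2⟩
      set m' := Nat.find hPex with hm'def
      obtain ⟨hm'c, hm's, hm'w⟩ := Nat.find_spec hPex
      have hm'min : ∀ j' < m', ¬(Can r dd p q j' ∧ SR r (ee dd p q j') x ∧
          SR r (ee dd p q w) (ee dd p q j')) := fun j' hj' => Nat.find_min hPex hj'
      have hm'ges : s ≤ m' := by
        by_contra hc
        push_neg at hc
        have hmem : m' ∈ LSx r dd p q x s :=
          Finset.mem_filter.mpr ⟨Finset.mem_range.mpr hc, hm'c, hm's⟩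
        exact absurd (hwmax m' hmem)
          (not_le.mpr (tv_lt hrefl htrans htotal hpq hwc hm'c hm'w))
      have hm'2 : 2 ≤ m' := by
        have h0 : m' ≠ 0 := by
          intro h; rw [← hm'def, h] at hm'w; exact hm'w.2 hwc.1.1
        have h1 : m' ≠ 1 := by
          intro h; rw [← hm'def, h] at hm's; exact hm's.2 hxq
        omega
      obtain ⟨nb, hnbR, hnbc, hnbs, hnbmin, hnbhalf⟩ :=
        tv_midpoint hrefl htrans htotal hpq hm'2 hm'c
      have hnbx : r x (ee dd p q nb) := by
        by_contra hc
        have hsnb : SR r (ee dd p q nb) x := ⟨(htotal _ _).resolve_left hc, hc⟩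
        exact hm'min nb hnbR ⟨hnbc, hsnb, sr_trans htrans hm'w hnbs⟩
      have hhalf := hnbhalf w (lt_of_lt_of_le hwR hm'ges) hwc hm'w
      have hnbB : tv r dd p q nb ≤ tv r dd p q v := by
        refine hnbmin v (lt_of_lt_of_le hvR hm'ges) hvc ?_
        exact sr_trans_right htrans hm's hvs
      -- new stage
      have hsne' : m' ∈ LSx r dd p q x (m' + 1) :=
        Finset.mem_filter.mpr ⟨Finset.mem_range.mpr (by omega), hm'c, hm's⟩
      have hune' : nb ∈ USx r dd p q x (m' + 1) :=
        Finset.mem_filter.mpr ⟨Finset.mem_range.mpr (by omega), hnbc, hnbx⟩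
      obtain ⟨w', hw', hwmax'⟩ :=
        Finset.exists_max_image _ (tv r dd p q) ⟨m', hsne'⟩
      obtain ⟨v', hv', hvmin'⟩ :=
        Finset.exists_min_image _ (tv r dd p q) ⟨nb, hune'⟩
      refine ⟨m' + 1, w', hw', v', hv', hwmax', hvmin', ?_⟩
      have h1 : tv r dd p q m' ≤ tv r dd p q w' := hwmax' m' hsne'
      have h2 : tv r dd p q v' ≤ tv r dd p q nb := hvmin' nb hune'
      have : tv r dd p q nb - tv r dd p q m' ≤ (1/2:ℝ)^(j+1) := by
        rw [pow_succ]
        nlinarith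
      linarith
  intro ε hε
  obtain ⟨j, hj⟩ := exists_pow_lt_of_lt_one hε (by norm_num : (1:ℝ)/2 < 1)
  obtain ⟨s, w, hw, v, hv, -, -, hgap⟩ := claim j
  obtain ⟨-, hwc, hws⟩ := Finset.mem_filter.mp hw
  obtain ⟨-, hvc, hvs⟩ := Finset.mem_filter.mp hv
  exact ⟨w, v, hwc, hws, hvc, hvs, lt_of_le_of_lt hgap hj⟩

include hrefl htrans htotal hpq in
theorem H1lem (x : X) (hpx : r p x)
    (hUne : ∃ n, Can r dd p q n ∧ SR r x (ee dd p q n))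
    (hnomin : ∀ n, Can r dd p q n → SR r x (ee dd p q n) →
      ∃ n', Can r dd p q n' ∧ SR r x (ee dd p q n') ∧ SR r (ee dd p q n') (ee dd p q n)) :
    ∀ ε > 0, ∃ k m, Can r dd p q k ∧ SR r x (ee dd p q k) ∧ Can r dd p q m ∧
      r (ee dd p q m) x ∧ tv r dd p q k - tv r dd p q m < ε := by
  have claim : ∀ j : ℕ, ∃ s,
      ∃ w ∈ (Finset.range s).filter
        (fun m => Can r dd p q m ∧ r (ee dd p q m) x),
      ∃ v ∈ (Finset.range s).filter
        (fun n => Can r dd p q n ∧ SR r x (ee dd p q n)),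
      (∀ b ∈ (Finset.range s).filter
        (fun m => Can r dd p q m ∧ r (ee dd p q m) x), tv r dd p q b ≤ tv r dd p q w) ∧
      (∀ b ∈ (Finset.range s).filter
        (fun n => Can r dd p q n ∧ SR r x (ee dd p q n)), tv r dd p q v ≤ tv r dd p q b) ∧
      tv r dd p q v - tv r dd p q w ≤ (1/2 : ℝ)^j := by
    intro j
    induction j with
    | zero =>
      obtain ⟨n₀, hn₀c, hn₀s⟩ := hUne
      have hsne : (0:ℕ) ∈ (Finset.range (n₀ + 2)).filter
          (fun m => Can r dd p q m ∧ r (ee dd p q m) x) :=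
        Finset.mem_filter.mpr ⟨Finset.mem_range.mpr (by omega), can_zero hrefl hpq, hpx⟩
      have hune : n₀ ∈ (Finset.range (n₀ + 2)).filter
          (fun n => Can r dd p q n ∧ SR r x (ee dd p q n)) :=
        Finset.mem_filter.mpr ⟨Finset.mem_range.mpr (by omega), hn₀c, hn₀s⟩
      obtain ⟨w, hw, hwmax⟩ := Finset.exists_max_image _ (tv r dd p q) ⟨0, hsne⟩
      obtain ⟨v, hv, hvmin⟩ := Finset.exists_min_image _ (tv r dd p q) ⟨n₀, hune⟩
      refine ⟨n₀ + 2, w, hw, v, hv, hwmax, hvmin, ?_⟩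
      obtain ⟨-, hwc, -⟩ := Finset.mem_filter.mp hw
      obtain ⟨-, hvc, -⟩ := Finset.mem_filter.mp hv
      have h1 := (tv_bounds hrefl htrans htotal hpq hwc).1
      have h2 := (tv_bounds hrefl htrans htotal hpq hvc).2
      simpa using by linarith
    | succ j ihj =>
      obtain ⟨s, w, hw, v, hv, hwmax, hvmin, hgap⟩ := ihj
      obtain ⟨hwR, hwc, hws⟩ := Finset.mem_filter.mp hw
      obtain ⟨hvR, hvc, hvs⟩ := Finset.mem_filter.mp hv
      rw [Finset.mem_range] at hwR hvR
      have hPex : ∃ n, Can r dd p q n ∧ SR r x (ee dd p q n) ∧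
          SR r (ee dd p q n) (ee dd p q v) := hnomin v hvc hvs
      set k' := Nat.find hPex with hk'def
      obtain ⟨hk'c, hk's, hk'v⟩ := Nat.find_spec hPex
      have hk'min : ∀ j' < k', ¬(Can r dd p q j' ∧ SR r x (ee dd p q j') ∧
          SR r (ee dd p q j') (ee dd p q v)) := fun j' hj' => Nat.find_min hPex hj'
      have hk'ges : s ≤ k' := by
        by_contra hc
        push_neg at hc
        have hmem : k' ∈ (Finset.range s).filter
            (fun n => Can r dd p q n ∧ SR r x (ee dd p q n)) :=
          Finset.mem_filter.mpr ⟨Finset.mem_range.mpr hc, hk'c, hk's⟩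
        exact absurd (hvmin k' hmem)
          (not_le.mpr (tv_lt hrefl htrans htotal hpq hk'c hvc hk'v))
      have hk'2 : 2 ≤ k' := by
        have h0 : k' ≠ 0 := by
          intro h; rw [← hk'def, h] at hk's; exact hk's.2 hpx
        have h1 : k' ≠ 1 := by
          intro h; rw [← hk'def, h] at hk'v; exact hk'v.2 hvc.1.2
        omega
      obtain ⟨na, hnaR, hnac, hnas, hnamax, hnahalf⟩ :=
        tv_midpoint' hrefl htrans htotal hpq hk'2 hk'c
      have hnax : r (ee dd p q na) x := by
        by_contra hc
        have hsna : SR r x (ee dd p q na) := ⟨(htotal _ _).resolve_left hc, hc⟩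
        exact hk'min na hnaR ⟨hnac, hsna, sr_trans htrans hnas hk'v⟩
      have hhalf := hnahalf v (lt_of_lt_of_le hvR hk'ges) hvc hk'v
      have hnaA : tv r dd p q w ≤ tv r dd p q na := by
        refine hnamax w (lt_of_lt_of_le hwR hk'ges) hwc ?_
        exact sr_trans_left htrans hws hk's
      have hsne' : k' ∈ (Finset.range (k' + 1)).filter
          (fun n => Can r dd p q n ∧ SR r x (ee dd p q n)) :=
        Finset.mem_filter.mpr ⟨Finset.mem_range.mpr (by omega), hk'c, hk's⟩
      have hune' : na ∈ (Finset.range (k' + 1)).filter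
          (fun m => Can r dd p q m ∧ r (ee dd p q m) x) :=
        Finset.mem_filter.mpr ⟨Finset.mem_range.mpr (by omega), hnac, hnax⟩
      obtain ⟨w', hw', hwmax'⟩ :=
        Finset.exists_max_image _ (tv r dd p q) ⟨na, hune'⟩
      obtain ⟨v', hv', hvmin'⟩ :=
        Finset.exists_min_image _ (tv r dd p q) ⟨k', hsne'⟩
      refine ⟨k' + 1, w', hw', v', hv', hwmax', hvmin', ?_⟩
      have h1 : tv r dd p q na ≤ tv r dd p q w' := hwmax' na hune'
      have h2 : tv r dd p q v' ≤ tv r dd p q k' := hvmin' k' hsne'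
      have : tv r dd p q k' - tv r dd p q na ≤ (1/2:ℝ)^(j+1) := by
        rw [pow_succ]
        nlinarith
      linarith
  intro ε hε
  obtain ⟨j, hj⟩ := exists_pow_lt_of_lt_one hε (by norm_num : (1:ℝ)/2 < 1)
  obtain ⟨s, w, hw, v, hv, -, -, hgap⟩ := claim j
  obtain ⟨-, hwc, hws⟩ := Finset.mem_filter.mp hw
  obtain ⟨-, hvc, hvs⟩ := Finset.mem_filter.mp hv
  exact ⟨v, w, hvc, hvs, hwc, hws, lt_of_le_of_lt hgap hj⟩

variable (r dd p q) in
def Adjacent (m k : ℕ) : Prop :=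
  Can r dd p q m ∧ Can r dd p q k ∧ SR r (ee dd p q m) (ee dd p q k) ∧
    ¬∃ n, Can r dd p q n ∧ SR r (ee dd p q m) (ee dd p q n) ∧ SR r (ee dd p q n) (ee dd p q k)

variable (r dd p q) in
def IsBad (m k : ℕ) : Prop :=
  Adjacent r dd p q m k ∧ ¬∃ a, Jmp r a (ee dd p q m)

variable (r dd p q) in
noncomputable def BadU : Set ℝ :=
  ⋃ (mk : ℕ × ℕ) (_ : IsBad r dd p q mk.1 mk.2), Ioo (tv r dd p q mk.1) (tv r dd p q mk.2)

variable (r dd p q) in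
noncomputable def iv (k : ℕ) : ℝ :=
  (MeasureTheory.volume (Ioc (0:ℝ) (tv r dd p q k) \ BadU r dd p q)).toReal

open MeasureTheory in
theorem badU_meas : MeasurableSet (BadU r dd p q) :=
  MeasurableSet.iUnion fun _ => MeasurableSet.iUnion fun _ => measurableSet_Ioo

open MeasureTheory in
theorem iv_fin (c : ℝ) : volume (Ioc (0:ℝ) c \ BadU r dd p q) ≠ ⊤ :=
  ((measure_mono diff_subset).trans_lt
    (by rw [Real.volume_Ioc]; exact ENNReal.ofReal_lt_top)).ne

theorem iv_nonneg (k : ℕ) : 0 ≤ iv r dd p q k := ENNReal.toReal_nonneg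

open MeasureTheory in
theorem iv_mono_tv {m k : ℕ} (h : tv r dd p q m ≤ tv r dd p q k) :
    iv r dd p q m ≤ iv r dd p q k :=
  ENNReal.toReal_mono (iv_fin _)
    (measure_mono (diff_subset_diff_left (Ioc_subset_Ioc_right h)))

open MeasureTheory in
theorem iv_le_tv {k : ℕ} (h : 0 ≤ tv r dd p q k) : iv r dd p q k ≤ tv r dd p q k := by
  have h1 : volume (Ioc (0:ℝ) (tv r dd p q k) \ BadU r dd p q) ≤
      ENNReal.ofReal (tv r dd p q k) := by
    rw [show ENNReal.ofReal (tv r dd p q k) = volume (Ioc (0:ℝ) (tv r dd p q k)) by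
      rw [Real.volume_Ioc, sub_zero]]
    exact measure_mono diff_subset
  calc iv r dd p q k ≤ (ENNReal.ofReal (tv r dd p q k)).toReal :=
        ENNReal.toReal_mono ENNReal.ofReal_ne_top h1
    _ = tv r dd p q k := ENNReal.toReal_ofReal h

open MeasureTheory in
theorem iv_lip {m k : ℕ} (h0 : 0 ≤ tv r dd p q m) (h : tv r dd p q m ≤ tv r dd p q k) :
    iv r dd p q k - iv r dd p q m ≤ tv r dd p q k - tv r dd p q m := by
  have hsub : Ioc (0:ℝ) (tv r dd p q k) \ BadU r dd p q ⊆
      (Ioc (0:ℝ) (tv r dd p q m) \ BadU r dd p q) ∪ Ioc (tv r dd p q m) (tv r dd p q k) := by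
    rintro z ⟨hz1, hz2⟩
    rcases le_or_gt z (tv r dd p q m) with h' | h'
    · exact Or.inl ⟨⟨hz1.1, h'⟩, hz2⟩
    · exact Or.inr ⟨h', hz1.2⟩
  have h1 : volume (Ioc (0:ℝ) (tv r dd p q k) \ BadU r dd p q) ≤
      volume (Ioc (0:ℝ) (tv r dd p q m) \ BadU r dd p q) +
        volume (Ioc (tv r dd p q m) (tv r dd p q k)) :=
    (measure_mono hsub).trans (measure_union_le _ _)
  have h2 : (volume (Ioc (0:ℝ) (tv r dd p q m) \ BadU r dd p q) +
      volume (Ioc (tv r dd p q m) (tv r dd p q k))).toReal =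
      iv r dd p q m + (tv r dd p q k - tv r dd p q m) := by
    rw [ENNReal.toReal_add (iv_fin _) (by rw [Real.volume_Ioc]; exact ENNReal.ofReal_ne_top),
      Real.volume_Ioc, ENNReal.toReal_ofReal (by linarith)]
    rfl
  have h3 : iv r dd p q k ≤ iv r dd p q m + (tv r dd p q k - tv r dd p q m) := by
    rw [← h2]
    exact ENNReal.toReal_mono
      (by rw [ENNReal.add_ne_top]
          exact ⟨iv_fin _, by rw [Real.volume_Ioc]; exact ENNReal.ofReal_ne_top⟩) h1
  linarith

variable (hrefl : ∀ x, r x x) (htrans : ∀ x y z, r x y → r y z → r x z)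
  (htotal : ∀ x y, r x y ∨ r y x) (hpq : SR r p q)

include htotal in
theorem tv_le_of_r {m k : ℕ} (hrefl : ∀ x, r x x) (htrans : ∀ x y z, r x y → r y z → r x z)
    (hpq : SR r p q)
    (hm : Can r dd p q m) (hk : Can r dd p q k)
    (h : r (ee dd p q m) (ee dd p q k)) : tv r dd p q m ≤ tv r dd p q k := by
  by_cases h2 : r (ee dd p q k) (ee dd p q m)
  · rw [can_unique htotal hm hk h h2]
  · exact (tv_lt hrefl htrans htotal hpq hm hk ⟨h, h2⟩).le

include hrefl htrans htotal hpq in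
theorem iv_mono' {m k : ℕ} (hm : Can r dd p q m) (hk : Can r dd p q k)
    (h : r (ee dd p q m) (ee dd p q k)) : iv r dd p q m ≤ iv r dd p q k :=
  iv_mono_tv (tv_le_of_r htotal hrefl htrans hpq hm hk h)

open MeasureTheory in
include hrefl htrans htotal hpq in
theorem iv_collapse {m k : ℕ} (hbad : IsBad r dd p q m k) : iv r dd p q k = iv r dd p q m := by
  obtain ⟨⟨hcm, hck, hs, -⟩, -⟩ := id hbad
  have hlt : tv r dd p q m < tv r dd p q k := tv_lt hrefl htrans htotal hpq hcm hck hs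
  refine le_antisymm ?_ (iv_mono_tv hlt.le)
  have hsub : Ioc (0:ℝ) (tv r dd p q k) \ BadU r dd p q ⊆
      (Ioc (0:ℝ) (tv r dd p q m) \ BadU r dd p q) ∪ {tv r dd p q k} := by
    rintro z ⟨hz1, hz2⟩
    rcases le_or_gt z (tv r dd p q m) with h' | h'
    · exact Or.inl ⟨⟨hz1.1, h'⟩, hz2⟩
    · rcases eq_or_lt_of_le hz1.2 with h'' | h''
      · exact Or.inr h''
      · refine absurd (mem_iUnion.mpr ⟨(m, k), ?_⟩) hz2
        exact mem_iUnion.mpr ⟨hbad, h', h''⟩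
  have h1 : volume (Ioc (0:ℝ) (tv r dd p q k) \ BadU r dd p q) ≤
      volume (Ioc (0:ℝ) (tv r dd p q m) \ BadU r dd p q) + volume ({tv r dd p q k} : Set ℝ) :=
    (measure_mono hsub).trans (measure_union_le _ _)
  rw [Real.volume_singleton, add_zero] at h1
  exact ENNReal.toReal_mono (iv_fin _) h1

theorem iv_zero' : iv r dd p q 0 = 0 := by
  unfold iv
  rw [tv_zero]
  simp

open MeasureTheory in
theorem iv_one_clean (hB : BadU r dd p q = ∅) : iv r dd p q 1 = 1 := by
  unfold iv
  rw [tv_one, hB, diff_empty, Real.volume_Ioc]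
  norm_num

variable (r dd p q) in
noncomputable def gv (x : X) : ℝ :=
  sInf (insert (iv r dd p q 1)
    {v | ∃ k, Can r dd p q k ∧ SR r x (ee dd p q k) ∧ iv r dd p q k = v})

theorem gv_lb (x : X) : ∀ v ∈ insert (iv r dd p q 1)
    {v | ∃ k, Can r dd p q k ∧ SR r x (ee dd p q k) ∧ iv r dd p q k = v}, (0:ℝ) ≤ v := by
  rintro v hv
  rcases mem_insert_iff.mp hv with rfl | ⟨k, -, -, rfl⟩ <;> exact iv_nonneg _

theorem gv_nonneg (x : X) : 0 ≤ gv r dd p q x :=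
  le_csInf ⟨_, mem_insert _ _⟩ (gv_lb x)

theorem gv_le_iv {x : X} {k : ℕ} (hk : Can r dd p q k) (hs : SR r x (ee dd p q k)) :
    gv r dd p q x ≤ iv r dd p q k :=
  csInf_le ⟨0, gv_lb x⟩ (mem_insert_iff.mpr (Or.inr ⟨k, hk, hs, rfl⟩))

theorem gv_le_one' (x : X) : gv r dd p q x ≤ iv r dd p q 1 :=
  csInf_le ⟨0, gv_lb x⟩ (mem_insert _ _)

include htrans in
theorem gv_mono {x y : X} (hxy : r x y) : gv r dd p q x ≤ gv r dd p q y := by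
  refine csInf_le_csInf ⟨0, gv_lb x⟩ ⟨_, mem_insert _ _⟩ ?_
  rintro v hv
  rcases mem_insert_iff.mp hv with rfl | ⟨k, hk, hs, rfl⟩
  · exact mem_insert _ _
  · exact mem_insert_iff.mpr (Or.inr ⟨k, hk, sr_trans_left htrans hxy hs, rfl⟩)

include hrefl htrans htotal hpq in
theorem gv_ge {x : X} {k₀ : ℕ} (hk₀ : Can r dd p q k₀) (hr : r (ee dd p q k₀) x) :
    iv r dd p q k₀ ≤ gv r dd p q x := by
  refine le_csInf ⟨_, mem_insert _ _⟩ ?_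
  rintro v hv
  rcases mem_insert_iff.mp hv with rfl | ⟨k, hk, hs, rfl⟩
  · exact iv_mono' hrefl htrans htotal hpq hk₀ (can_one hrefl hpq) hk₀.1.2
  · exact iv_mono' hrefl htrans htotal hpq hk₀ hk (htrans _ _ _ hr hs.1)

include hrefl htrans htotal hpq in
theorem gv_zero {x : X} (hs : SR r x p) : gv r dd p q x = 0 := by
  refine le_antisymm ?_ (gv_nonneg x)
  have := gv_le_iv (dd := dd) (can_zero hrefl hpq) (x := x) (k := 0) hs
  rwa [iv_zero'] at this

include hrefl htrans in
theorem can_of_ep {j : ℕ} (hj : Ep r dd p q j) :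
    ∃ n, Can r dd p q n ∧ r (ee dd p q n) (ee dd p q j) ∧ r (ee dd p q j) (ee dd p q n) := by
  have hex : ∃ n, Ep r dd p q n ∧ r (ee dd p q n) (ee dd p q j) ∧
      r (ee dd p q j) (ee dd p q n) := ⟨j, hj, hrefl _, hrefl _⟩
  refine ⟨Nat.find hex, ⟨(Nat.find_spec hex).1, ?_⟩,
    (Nat.find_spec hex).2.1, (Nat.find_spec hex).2.2⟩
  intro m hm ⟨hem, h1, h2⟩
  exact Nat.find_min hex hm ⟨hem, htrans _ _ _ h1 (Nat.find_spec hex).2.1,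
    htrans _ _ _ (Nat.find_spec hex).2.2 h2⟩

include hrefl htrans htotal hpq in
theorem nomax (hD : ∀ x y, SR r x y → ∃ k, r x (dd k) ∧ r (dd k) y)
    {x : X} (hxq : r x q)
    (h2a : ¬∃ a, SR r a x ∧ ∀ z, SR r a z → r x z) :
    ∀ m, Can r dd p q m → SR r (ee dd p q m) x →
      ∃ n, Can r dd p q n ∧ SR r (ee dd p q m) (ee dd p q n) ∧ SR r (ee dd p q n) x := by
  intro m hcm hsmx
  have hz : ∃ z, SR r (ee dd p q m) z ∧ SR r z x := by
    by_contra h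
    push_neg at h
    exact h2a ⟨ee dd p q m, hsmx, fun z hz => of_not_sr htotal (h z hz)⟩
  obtain ⟨z, hz1, hz2⟩ := hz
  have hz' : ∃ z', SR r z z' ∧ SR r z' x := by
    by_contra h
    push_neg at h
    exact h2a ⟨z, hz2, fun z' hz' => of_not_sr htotal (h z' hz')⟩
  obtain ⟨z', hz'1, hz'2⟩ := hz'
  obtain ⟨kd, hd1, hd2⟩ := hD z z' hz'1
  have hsd : SR r (ee dd p q m) (dd kd) := sr_trans_right htrans hz1 hd1
  have hdx : SR r (dd kd) x := sr_trans_left htrans hd2 hz'2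
  have hep : Ep r dd p q (kd + 2) := by
    refine ⟨htrans _ _ _ hcm.1.1 hsd.1, htrans _ _ _ hdx.1 hxq⟩
  obtain ⟨n, hcn, hn1, hn2⟩ := can_of_ep hrefl htrans hep
  exact ⟨n, hcn, sr_trans_right htrans hsd hn2, sr_trans_left htrans hn1 hdx⟩

include hrefl htrans htotal hpq in
theorem adj_jump (hD : ∀ x y, SR r x y → ∃ k, r x (dd k) ∧ r (dd k) y)
    {m k : ℕ} (hadj : Adjacent r dd p q m k) :
    ∃ a b, Jmp r a b ∧ r (ee dd p q m) a ∧ r b (ee dd p q k) := by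
  obtain ⟨hcm, hck, hs, hno⟩ := hadj
  by_cases hz : ∃ z, SR r (ee dd p q m) z ∧ SR r z (ee dd p q k)
  · obtain ⟨z, hz1, hz2⟩ := hz
    refine ⟨z, ee dd p q k, ⟨hz2, ?_⟩, hz1.1, hrefl _⟩
    intro z' hz'
    by_contra hc
    have hz'k : SR r z' (ee dd p q k) := ⟨(htotal _ _).resolve_left hc, hc⟩
    obtain ⟨kd, hd1, hd2⟩ := hD z z' hz'
    have hsd : SR r (ee dd p q m) (dd kd) := sr_trans_right htrans hz1 hd1
    have hdk : SR r (dd kd) (ee dd p q k) := sr_trans_left htrans hd2 hz'k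
    have hep : Ep r dd p q (kd + 2) :=
      ⟨htrans _ _ _ hcm.1.1 hsd.1, htrans _ _ _ hdk.1 hck.1.2⟩
    obtain ⟨n, hcn, hn1, hn2⟩ := can_of_ep hrefl htrans hep
    exact hno ⟨n, hcn, sr_trans_right htrans hsd hn2, sr_trans_left htrans hn1 hdk⟩
  · push_neg at hz
    refine ⟨ee dd p q m, ee dd p q k, ⟨hs, ?_⟩, hrefl _, hrefl _⟩
    intro z hz'
    exact of_not_sr htotal (hz z hz')

include hrefl htrans htotal hpq in
theorem gv_lt_open (hO : ∀ a : X, IsOpen {t | SR r t a} ∧ IsOpen {t | SR r a t})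
    (c : ℝ) : IsOpen {x | gv r dd p q x < c} := by
  have heq : {x | gv r dd p q x < c} = {x : X | iv r dd p q 1 < c} ∪
      ⋃ (k : ℕ), ⋃ (_ : Can r dd p q k ∧ iv r dd p q k < c), {x | SR r x (ee dd p q k)} := by
    ext x
    simp only [mem_setOf_eq, mem_union, mem_iUnion]
    constructor
    · intro hx
      obtain ⟨v, hv, hvc⟩ := (csInf_lt_iff ⟨0, gv_lb x⟩ ⟨_, mem_insert _ _⟩).mp hx
      rcases mem_insert_iff.mp hv with rfl | ⟨k, hck, hs, rfl⟩
      · exact Or.inl hvc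
      · exact Or.inr ⟨k, ⟨hck, hvc⟩, hs⟩
    · intro hx
      rcases hx with h | ⟨k, ⟨hck, hivk⟩, hs⟩
      · exact lt_of_le_of_lt (gv_le_one' x) h
      · exact lt_of_le_of_lt (gv_le_iv hck hs) hivk
  rw [heq]
  refine IsOpen.union ?_ (isOpen_iUnion fun k => isOpen_iUnion fun _ => (hO _).1)
  by_cases h : iv r dd p q 1 < c
  · convert isOpen_univ
    simp [h, eq_univ_iff_forall]
  · convert isOpen_empty
    simp only [eq_empty_iff_forall_notMem, mem_setOf_eq]
    exact fun x => h

include hrefl htrans htotal hpq in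
theorem gv_gt_open (hD : ∀ x y, SR r x y → ∃ k, r x (dd k) ∧ r (dd k) y)
    (hO : ∀ a : X, IsOpen {t | SR r t a} ∧ IsOpen {t | SR r a t})
    (c : ℝ) : IsOpen {x | c < gv r dd p q x} := by
  rw [isOpen_iff_forall_mem_open]
  intro x hx
  rw [mem_setOf_eq] at hx
  rcases lt_or_ge c 0 with hc0 | hc0
  · exact ⟨univ, fun z _ => lt_of_lt_of_le hc0 (gv_nonneg z), isOpen_univ, mem_univ x⟩
  by_cases hmin : ∃ w, SR r w x
  swap
  · -- x is a minimum
    push_neg at hmin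
    refine ⟨univ, fun z _ => ?_, isOpen_univ, mem_univ x⟩
    have hxz : r x z := of_not_sr htotal (hmin z)
    exact lt_of_lt_of_le hx (gv_mono htrans hxz)
  by_cases hq : r x q
  swap
  · -- q strictly below x
    have hsq : SR r q x := sr_of_not htotal hq
    refine ⟨{z | SR r q z}, ?_, (hO q).2, hsq⟩
    intro z hz
    rw [mem_setOf_eq] at hz ⊢
    have h1 : iv r dd p q 1 ≤ gv r dd p q z :=
      gv_ge hrefl htrans htotal hpq (can_one hrefl hpq) hz.1
    exact lt_of_lt_of_le (lt_of_lt_of_le hx (gv_le_one' x)) h1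
  by_cases h2a : ∃ a, SR r a x ∧ ∀ z, SR r a z → r x z
  · -- a jump right below the class of x
    obtain ⟨a, ha1, ha2⟩ := h2a
    refine ⟨{z | SR r a z}, ?_, (hO a).2, ha1⟩
    intro z hz
    rw [mem_setOf_eq] at hz ⊢
    exact lt_of_lt_of_le hx (gv_mono htrans (ha2 z hz))
  -- main case
  have hLne : ∃ m, Can r dd p q m ∧ SR r (ee dd p q m) x := by
    by_contra hno
    push_neg at hno
    have hxp : r x p := of_not_sr htotal (hno 0 (can_zero hrefl hpq))
    by_cases hpx : r p x
    · -- x ∼ p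
      by_cases hadj : ∃ k₁, Adjacent r dd p q 0 k₁
      · obtain ⟨k₁, hk₁⟩ := hadj
        have hbad : IsBad r dd p q 0 k₁ := by
          refine ⟨hk₁, ?_⟩
          rintro ⟨a, ha⟩
          refine h2a ⟨a, sr_trans_right htrans ha.1 hpx, fun z hz => ?_⟩
          exact htrans _ _ _ hxp (ha.2 z hz)
        have hcol := iv_collapse hrefl htrans htotal hpq hbad
        have h1 : gv r dd p q x ≤ iv r dd p q k₁ :=
          gv_le_iv hk₁.2.1 (sr_trans_left htrans hxp hk₁.2.2.1)
        rw [hcol, iv_zero'] at h1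
        linarith
      · have hsxq : SR r x q :=
          ⟨hq, fun hc => hpq.2 (htrans _ _ _ hc hxp)⟩
        have hUnomin : ∀ n, Can r dd p q n → SR r x (ee dd p q n) →
            ∃ n', Can r dd p q n' ∧ SR r x (ee dd p q n') ∧
              SR r (ee dd p q n') (ee dd p q n) := by
          intro n hcn hsn
          have hs0n : SR r (ee dd p q 0) (ee dd p q n) := sr_trans_left htrans hpx hsn
          by_contra h'
          push_neg at h'
          refine hadj ⟨n, can_zero hrefl hpq, hcn, hs0n, ?_⟩
          rintro ⟨n', hcn', h1, h2⟩
          exact h' n' hcn' (sr_trans_left htrans hxp h1) h2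
        obtain ⟨k, m, hck, hskx, hcm, hrmx, hgap⟩ :=
          H1lem hrefl htrans htotal hpq x hpx ⟨1, can_one hrefl hpq, hsxq⟩ hUnomin
            (gv r dd p q x) (by linarith)
        have hm0 : m = 0 := can_unique htotal hcm (can_zero hrefl hpq)
          (htrans _ _ _ hrmx hxp) hcm.1.1
        rw [hm0, tv_zero, sub_zero] at hgap
        have h1 : gv r dd p q x ≤ iv r dd p q k := gv_le_iv hck hskx
        have h2 : iv r dd p q k ≤ tv r dd p q k :=
          iv_le_tv (tv_bounds hrefl htrans htotal hpq hck).1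
        linarith
    · have := gv_zero (dd := dd) hrefl htrans htotal hpq (x := x) ⟨hxp, hpx⟩
      linarith
  have hnomax := nomax hrefl htrans htotal hpq hD hq h2a
  -- upper bound on gv x by iv of any weak upper index
  have hub : ∀ k₀, Can r dd p q k₀ → r x (ee dd p q k₀) →
      gv r dd p q x ≤ iv r dd p q k₀ := by
    intro k₀ hck₀ hrxk₀
    by_cases hkx : r (ee dd p q k₀) x
    swap
    · exact gv_le_iv hck₀ ⟨hrxk₀, hkx⟩
    · by_cases hadj : ∃ k₁, Adjacent r dd p q k₀ k₁
      · obtain ⟨k₁, hk₁⟩ := hadj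
        have hbad : IsBad r dd p q k₀ k₁ := by
          refine ⟨hk₁, ?_⟩
          rintro ⟨a, ha⟩
          refine h2a ⟨a, sr_trans_right htrans ha.1 hkx, fun z hz => ?_⟩
          exact htrans _ _ _ hrxk₀ (ha.2 z hz)
        have hcol := iv_collapse hrefl htrans htotal hpq hbad
        have h1 : gv r dd p q x ≤ iv r dd p q k₁ :=
          gv_le_iv hk₁.2.1 (sr_trans_left htrans hrxk₀ hk₁.2.2.1)
        rwa [hcol] at h1
      · by_cases hqx : r q x
        · have h1 : k₀ = 1 := can_unique htotal hck₀ (can_one hrefl hpq)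
            (htrans _ _ _ hkx hq) (htrans _ _ _ hqx hrxk₀)
          rw [h1]
          exact gv_le_one' x
        · have hsxq : SR r x q := ⟨hq, hqx⟩
          have hUnomin : ∀ n, Can r dd p q n → SR r x (ee dd p q n) →
              ∃ n', Can r dd p q n' ∧ SR r x (ee dd p q n') ∧
                SR r (ee dd p q n') (ee dd p q n) := by
            intro n hcn hsn
            by_contra h'
            push_neg at h'
            refine hadj ⟨n, hck₀, hcn, sr_trans_left htrans hkx hsn, ?_⟩
            rintro ⟨n', hcn', h1, h2⟩
            exact h' n' hcn' (sr_trans_left htrans hrxk₀ h1) h2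
          have hpx' : r p x := htrans _ _ _ hck₀.1.1 hkx
          refine le_of_forall_pos_le_add ?_
          intro ε hε
          obtain ⟨k, m, hck, hskx, hcm, hrmx, hgap⟩ :=
            H1lem hrefl htrans htotal hpq x hpx' ⟨1, can_one hrefl hpq, hsxq⟩ hUnomin ε hε
          have h1 : gv r dd p q x ≤ iv r dd p q k := gv_le_iv hck hskx
          have h2 : iv r dd p q k - iv r dd p q m ≤ tv r dd p q k - tv r dd p q m :=
            iv_lip (tv_bounds hrefl htrans htotal hpq hcm).1
              (tv_lt hrefl htrans htotal hpq hcm hck (sr_trans_left htrans hrmx hskx)).le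
          have h3 : iv r dd p q m ≤ iv r dd p q k₀ :=
            iv_mono' hrefl htrans htotal hpq hcm hck₀ (htrans _ _ _ hrmx hrxk₀)
          linarith
  obtain ⟨m, k, hcm, hsmx, hck, hrxk, hgap⟩ :=
    H2lem hrefl htrans htotal hpq x hq hLne hnomax (gv r dd p q x - c) (by linarith)
  have h1 : gv r dd p q x ≤ iv r dd p q k := hub k hck hrxk
  have h2 : iv r dd p q k - iv r dd p q m ≤ tv r dd p q k - tv r dd p q m :=
    iv_lip (tv_bounds hrefl htrans htotal hpq hcm).1
      (tv_lt hrefl htrans htotal hpq hcm hck (sr_trans_right htrans hsmx hrxk)).le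
  have hcm' : c < iv r dd p q m := by linarith
  refine ⟨{z | SR r (ee dd p q m) z}, ?_, (hO _).2, hsmx⟩
  intro z hz
  rw [mem_setOf_eq] at hz ⊢
  exact lt_of_lt_of_le hcm' (gv_ge hrefl htrans htotal hpq hcm hz.1)

include hrefl htrans htotal hpq in
theorem gv_continuous (hD : ∀ x y, SR r x y → ∃ k, r x (dd k) ∧ r (dd k) y)
    (hO : ∀ a : X, IsOpen {t | SR r t a} ∧ IsOpen {t | SR r a t}) :
    Continuous (gv r dd p q) :=
  cont_aux (gv_lt_open hrefl htrans htotal hpq hO) (gv_gt_open hrefl htrans htotal hpq hD hO)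

include hrefl htrans htotal hpq in
theorem gv_one_clean (hD : ∀ x y, SR r x y → ∃ k, r x (dd k) ∧ r (dd k) y)
    (hclean : ¬∃ a b, Jmp r a b ∧ r p a ∧ r b q) {y : X} (hqy : SR r q y) :
    gv r dd p q y = 1 := by
  have hB : BadU r dd p q = ∅ := by
    rw [eq_empty_iff_forall_notMem]
    intro t ht
    obtain ⟨mk, hmk⟩ := mem_iUnion.mp ht
    obtain ⟨hbad, -⟩ := mem_iUnion.mp hmk
    obtain ⟨a, b, hj, h1, h2⟩ := adj_jump hrefl htrans htotal hpq hD hbad.1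
    exact hclean ⟨a, b, hj, htrans _ _ _ hbad.1.1.1.1 h1,
      htrans _ _ _ h2 hbad.1.2.1.1.2⟩
  have hset : {v | ∃ k, Can r dd p q k ∧ SR r y (ee dd p q k) ∧ iv r dd p q k = v} = ∅ := by
    rw [eq_empty_iff_forall_notMem]
    rintro v ⟨k, hck, hs, rfl⟩
    exact (sr_trans_right htrans (sr_trans_left htrans hqy.1 hs) hck.1.2).2 (hrefl q)
  unfold gv
  rw [hset, insert_empty_eq, csInf_singleton, iv_one_clean hB]

end Gpart

section Assemble

variable (r)
variable (dd : ℕ → X)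

noncomputable def GG (i j : ℕ) (x : X) : ℝ :=
  if SR r (dd i) (dd j) then gv r dd (dd i) (dd j) x else 0

noncomputable def Tfun (x : X) : ℝ :=
  ∑' ij : ℕ × ℕ, (1/2)^ij.1 * ((1/2)^ij.2 * GG r dd ij.1 ij.2 x)

variable {r}
variable (hrefl : ∀ x, r x x) (htrans : ∀ x y z, r x y → r y z → r x z)
  (htotal : ∀ x y, r x y ∨ r y x)

theorem gv_le_one'' (p q : X) (x : X) : gv r dd p q x ≤ 1 := by
  refine (gv_le_one' x).trans ?_
  have h := iv_le_tv (r := r) (dd := dd) (p := p) (q := q) (k := 1)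
    (by rw [tv_one]; norm_num)
  rwa [tv_one] at h

theorem GG_nonneg (i j : ℕ) (x : X) : 0 ≤ GG r dd i j x := by
  unfold GG; split_ifs
  · exact gv_nonneg x
  · exact le_refl 0

theorem GG_le_one (i j : ℕ) (x : X) : GG r dd i j x ≤ 1 := by
  unfold GG; split_ifs
  · exact gv_le_one'' dd _ _ x
  · norm_num

include htrans in
theorem GG_mono (i j : ℕ) {x y : X} (hxy : r x y) : GG r dd i j x ≤ GG r dd i j y := by
  unfold GG; split_ifs
  · exact gv_mono htrans hxy
  · exact le_refl 0

theorem wsummable : Summable (fun ij : ℕ × ℕ => ((1/2:ℝ))^ij.1 * (1/2)^ij.2) :=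
  Summable.mul_of_nonneg summable_geometric_two summable_geometric_two
    (fun n => by positivity) (fun n => by positivity)

theorem Tsummable (x : X) :
    Summable (fun ij : ℕ × ℕ => (1/2:ℝ)^ij.1 * ((1/2)^ij.2 * GG r dd ij.1 ij.2 x)) := by
  refine Summable.of_nonneg_of_le (fun ij => ?_) (fun ij => ?_) wsummable
  · have := GG_nonneg dd (r := r) ij.1 ij.2 x
    positivity
  · have h1 := GG_le_one dd (r := r) ij.1 ij.2 x
    have h2 := GG_nonneg dd (r := r) ij.1 ij.2 x
    have hp1 : (0:ℝ) ≤ (1/2:ℝ)^ij.1 := by positivity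
    have hp2 : (0:ℝ) ≤ (1/2:ℝ)^ij.2 := by positivity
    refine mul_le_mul_of_nonneg_left ?_ hp1
    calc (1/2:ℝ)^ij.2 * GG r dd ij.1 ij.2 x ≤ (1/2:ℝ)^ij.2 * 1 :=
        mul_le_mul_of_nonneg_left h1 hp2
      _ = (1/2:ℝ)^ij.2 := mul_one _

include hrefl htrans htotal in
theorem Tcont (hD : ∀ x y, SR r x y → ∃ k, r x (dd k) ∧ r (dd k) y)
    (hO : ∀ a : X, IsOpen {t | SR r t a} ∧ IsOpen {t | SR r a t}) :
    Continuous (Tfun r dd) := by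
  refine continuous_tsum (u := fun ij : ℕ × ℕ => (1/2:ℝ)^ij.1 * (1/2)^ij.2) ?_ wsummable ?_
  · intro ij
    refine continuous_const.mul (continuous_const.mul ?_)
    unfold GG
    split_ifs with h
    · exact gv_continuous hrefl htrans htotal h hD hO
    · exact continuous_const
  · intro ij x
    have h1 := GG_le_one dd (r := r) ij.1 ij.2 x
    have h2 := GG_nonneg dd (r := r) ij.1 ij.2 x
    have hp1 : (0:ℝ) ≤ (1/2:ℝ)^ij.1 := by positivity
    have hp2 : (0:ℝ) ≤ (1/2:ℝ)^ij.2 := by positivity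
    rw [Real.norm_eq_abs, abs_of_nonneg (by positivity)]
    refine mul_le_mul_of_nonneg_left ?_ hp1
    calc (1/2:ℝ)^ij.2 * GG r dd ij.1 ij.2 x ≤ (1/2:ℝ)^ij.2 * 1 :=
        mul_le_mul_of_nonneg_left h1 hp2
      _ = (1/2:ℝ)^ij.2 := mul_one _

include htrans in
theorem Tmono {x y : X} (hxy : r x y) : Tfun r dd x ≤ Tfun r dd y := by
  refine Summable.tsum_le_tsum (fun ij => ?_) (Tsummable dd x) (Tsummable dd y)
  have hm := GG_mono dd htrans ij.1 ij.2 hxy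
  have hp1 : (0:ℝ) ≤ (1/2:ℝ)^ij.1 := by positivity
  have hp2 : (0:ℝ) ≤ (1/2:ℝ)^ij.2 := by positivity
  exact mul_le_mul_of_nonneg_left (mul_le_mul_of_nonneg_left hm hp2) hp1

include hrefl htrans htotal in
theorem Tstrict (hD : ∀ x y, SR r x y → ∃ k, r x (dd k) ∧ r (dd k) y)
    {x y : X} {i j : ℕ} (h1 : SR r x (dd i)) (h2 : SR r (dd i) (dd j)) (h3 : SR r (dd j) y)
    (hclean : ¬∃ a b, Jmp r a b ∧ r (dd i) a ∧ r b (dd j)) :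
    Tfun r dd x < Tfun r dd y := by
  have hxy : r x y := htrans _ _ _ h1.1 (htrans _ _ _ h2.1 h3.1)
  refine Summable.tsum_lt_tsum (i := (i, j)) (fun ij => ?_) ?_ (Tsummable dd x) (Tsummable dd y)
  · have hm := GG_mono dd htrans ij.1 ij.2 hxy
    have hp1 : (0:ℝ) ≤ (1/2:ℝ)^ij.1 := by positivity
    have hp2 : (0:ℝ) ≤ (1/2:ℝ)^ij.2 := by positivity
    exact mul_le_mul_of_nonneg_left (mul_le_mul_of_nonneg_left hm hp2) hp1
  · have hgx : GG r dd i j x = 0 := by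
      unfold GG
      rw [if_pos h2]
      exact gv_zero hrefl htrans htotal h2 h1
    have hgy : GG r dd i j y = 1 := by
      unfold GG
      rw [if_pos h2]
      exact gv_one_clean hrefl htrans htotal h2 hD hclean h3
    simp only [hgx, hgy, mul_zero, mul_one]
    positivity

include hrefl htrans htotal in
theorem caseB (hD : ∀ x y, SR r x y → ∃ k, r x (dd k) ∧ r (dd k) y)
    {x y : X} (hxy : SR r x y) (hnj : ¬∃ a b, Jmp r a b ∧ r x a ∧ r b y) :
    ∃ i j, SR r x (dd i) ∧ SR r (dd i) (dd j) ∧ SR r (dd j) y ∧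
      ¬∃ a b, Jmp r a b ∧ r (dd i) a ∧ r b (dd j) := by
  have hbet : ∀ u v, SR r u v → r x u → r v y → ∃ z, SR r u z ∧ SR r z v := by
    intro u v huv hxu hvy
    by_contra h
    push_neg at h
    exact hnj ⟨u, v, ⟨huv, fun z hz => of_not_sr htotal (h z hz)⟩, hxu, hvy⟩
  obtain ⟨z, hz1, hz2⟩ := hbet x y hxy (hrefl x) (hrefl y)
  obtain ⟨z1, hz11, hz12⟩ := hbet x z hz1 (hrefl x) hz2.1
  obtain ⟨z2, hz21, hz22⟩ := hbet z y hz2 hz1.1 (hrefl y)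
  obtain ⟨z3, hz31, hz32⟩ := hbet z2 y hz22 (htrans _ _ _ hz1.1 hz21.1) (hrefl y)
  obtain ⟨i, hi1, hi2⟩ := hD z1 z hz12
  obtain ⟨j, hj1, hj2⟩ := hD z2 z3 hz31
  have hxi : SR r x (dd i) := sr_trans_right htrans hz11 hi1
  have hij : SR r (dd i) (dd j) :=
    sr_trans_right htrans (sr_trans_left htrans hi2 hz21) hj1
  have hjy : SR r (dd j) y := sr_trans_left htrans hj2 hz32
  refine ⟨i, j, hxi, hij, hjy, ?_⟩
  rintro ⟨a, b, hj', ha, hb⟩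
  exact hnj ⟨a, b, hj', htrans _ _ _ hxi.1 ha, htrans _ _ _ hb hjy.1⟩

include hrefl htrans htotal in
theorem backward_main
    (hO : ∀ a : X, IsOpen {t | SR r t a} ∧ IsOpen {t | SR r a t})
    (hDset : ∃ D : Set X, D.Countable ∧ ∀ x y, SR r x y → ∃ d ∈ D, r x d ∧ r d y) :
    ∃ u : X → ℝ, Continuous u ∧ ∀ x y, r x y ↔ u x ≤ u y := by
  by_cases htriv : ∀ x y, r x y
  · exact ⟨fun _ => 0, continuous_const,
      fun x y => ⟨fun _ => le_refl 0, fun _ => htriv x y⟩⟩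
  push_neg at htriv
  obtain ⟨x0, y0, hxy0⟩ := htriv
  have hsr0 : SR r y0 x0 := sr_of_not htotal hxy0
  obtain ⟨D, hDc, hDd⟩ := hDset
  have hDne : D.Nonempty := by
    obtain ⟨d, hd, -⟩ := hDd y0 x0 hsr0
    exact ⟨d, hd⟩
  obtain ⟨dd, hdd⟩ := hDc.exists_eq_range hDne
  have hD : ∀ x y, SR r x y → ∃ k, r x (dd k) ∧ r (dd k) y := by
    intro x y hs
    obtain ⟨d, hd, h1, h2⟩ := hDd x y hs
    rw [hdd] at hd
    obtain ⟨k, rfl⟩ := hd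
    exact ⟨k, h1, h2⟩
  refine ⟨fun x => Jfun r dd x + Tfun r dd x,
    (Jcont dd htrans htotal hO).add (Tcont dd hrefl htrans htotal hD hO), ?_⟩
  have hmono : ∀ x y, r x y → Jfun r dd x + Tfun r dd x ≤ Jfun r dd y + Tfun r dd y :=
    fun x y hxy => add_le_add (Jmono dd htrans hxy) (Tmono dd htrans hxy)
  have hstrict : ∀ x y, SR r x y →
      Jfun r dd x + Tfun r dd x < Jfun r dd y + Tfun r dd y := by
    intro x y hs
    by_cases hjump : ∃ a b, Jmp r a b ∧ r x a ∧ r b y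
    · obtain ⟨a, b, hab, hxa, hby⟩ := hjump
      obtain ⟨k, hk⟩ := hD a b hab.1
      have hxy : r x y := htrans _ _ _ hxa (htrans _ _ _ hab.1.1 hby)
      exact add_lt_add_of_lt_of_le (Jstrict dd htrans htotal hab hxa hby hk)
        (Tmono dd htrans hxy)
    · obtain ⟨i, j, h1, h2, h3, hclean⟩ := caseB dd hrefl htrans htotal hD hs hjump
      have hxy : r x y := hs.1
      exact add_lt_add_of_le_of_lt (Jmono dd htrans hxy)
        (Tstrict dd hrefl htrans htotal hD h1 h2 h3 hclean)
  intro x y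
  constructor
  · exact fun h => hmono x y h
  · intro h
    by_contra hc
    exact absurd h (not_le.mpr (hstrict y x (sr_of_not htotal hc)))

end Assemble

end Backward

end DebreuAux

/-- A total preorder on a topological space is representable by
a continuous utility function iff it is perfectly separable and
`τ`-continuous (its strict lower and upper contour sets are open). -/
theorem continuous_representable_iff_perfectly_separable_and_continuous
    {X : Type*} [TopologicalSpace X] (r : X → X → Prop)
    (hrefl : ∀ x, r x x) (htrans : ∀ x y z, r x y → r y z → r x z)
    (htotal : ∀ x y, r x y ∨ r y x) :
    (∃ u : X → ℝ, Continuous u ∧ ∀ x y, r x y ↔ u x ≤ u y) ↔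
      ((∃ D : Set X, D.Countable ∧
          ∀ x y, (r x y ∧ ¬ r y x) → ∃ d ∈ D, r x d ∧ r d y) ∧
        (∀ a : X, IsOpen {t : X | r t a ∧ ¬ r a t} ∧
          IsOpen {t : X | r a t ∧ ¬ r t a})) := by
  constructor
  · rintro ⟨u, hu, hrep⟩
    constructor
    · rcases isEmpty_or_nonempty X with hX | hX
      · exact ⟨∅, Set.countable_empty, fun x => (IsEmpty.false x).elim⟩
      · exact DebreuAux.forward_dense hrep
    · exact fun a => DebreuAux.forward_contours hu hrep a
  · rintro ⟨hD, hO⟩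
    exact DebreuAux.backward_main hrefl htrans htotal hO hD
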